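/- Let ξ : V → m be a linear map from an inner product space (V, g) into an inner product subspace (m, B) of skew-symmetric endomorphisms, let ξ· : m → V denote the negative adjoint (g(ξ·α, X) = −B(α, ξ_X)), and let L = Id_V − ξ·∘ξ, which is g-symmetric positive definite. Then for every X ∈ V, the vector X^{h'} := X^h + ξ_X (in the orthogonal direct sum V ⊕ so, with so ⊇ m) satisfies: (i) ⟨X^{h'}, Y^{h'}⟩ = g(X, LY); (ii) the orthogonal projection of X^h onto the subspace T = {Y^{h'} : Y ∈ V} ⊕ g' (where g' = m^⊥ ∩ so) equals (L⁻¹X)^{h'}; (iii) the orthogonal projection of α ∈ so onto T equals α_g − (L⁻¹(ξ·α_m))^{h'}, where α = α_g + α_m is the decomposition along so = g' ⊕ m. -/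

import Mathlib

/-- Pointwise linear algebra of Proposition 4: in the orthogonal direct sum `V ⊕ so`
(inner product `⟨(X,α),(Y,β)⟩ = ⟪X,Y⟫ + ⟪α,β⟫`), with `ξ : V → m ⊆ so`, negative adjoint
`ξd` (`⟪ξd α, X⟫ = −⟪α, ξ X⟫`), `L = Id − ξd∘ξ` with inverse `Linv`,
`X^{h'} = (X, ξ X)` and `T = {Y^{h'}} ⊕ g'` with `g' = mᗮ`:
(i) `⟨X^{h'}, Y^{h'}⟩ = g(X, LY)`;
(ii) the orthogonal projection of `X^h = (X,0)` onto `T` is `(L⁻¹X)^{h'}`;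
(iii) the orthogonal projection of `(0,α)` onto `T` is `α_g − (L⁻¹(ξd α_m))^{h'}`. -/
theorem stmt11 (V so : Type*) [NormedAddCommGroup V] [InnerProductSpace ℝ V]
    [NormedAddCommGroup so] [InnerProductSpace ℝ so]
    (m : Submodule ℝ so)
    (ξ : V →ₗ[ℝ] so) (hξm : ∀ X, ξ X ∈ m)
    (ξd : so →ₗ[ℝ] V) (hξd : ∀ (α : so) (X : V), (inner ℝ (ξd α) X : ℝ) = - inner ℝ α (ξ X))
    (Linv : V →ₗ[ℝ] V)
    (hLinv1 : ∀ X : V, Linv X - ξd (ξ (Linv X)) = X)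
    (hLinv2 : ∀ X : V, Linv (X - ξd (ξ X)) = X) :
    (∀ X Y : V,
      (inner ℝ X Y : ℝ) + inner ℝ (ξ X) (ξ Y) = inner ℝ X (Y - ξd (ξ Y))) ∧
    (∀ X : V,
      (∃ (Y : V) (γ : so), γ ∈ mᗮ ∧
        ((Linv X, ξ (Linv X)) : V × so) = (Y, ξ Y + γ)) ∧
      (∀ (Y : V) (γ : so), γ ∈ mᗮ →
        (inner ℝ (X - Linv X) Y : ℝ) + inner ℝ ((0 : so) - ξ (Linv X)) (ξ Y + γ) = 0)) ∧
    (∀ (α αg αm : so), αg ∈ mᗮ → αm ∈ m → α = αg + αm →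
      (∃ (Y : V) (γ : so), γ ∈ mᗮ ∧
        ((-(Linv (ξd αm)), αg - ξ (Linv (ξd αm))) : V × so) = (Y, ξ Y + γ)) ∧
      (∀ (Y : V) (γ : so), γ ∈ mᗮ →
        (inner ℝ ((0 : V) - (-(Linv (ξd αm)))) Y : ℝ)
          + inner ℝ (α - (αg - ξ (Linv (ξd αm)))) (ξ Y + γ) = 0)) := by
  have key : ∀ (α : so) (X : V), (inner ℝ X (ξd α) : ℝ) = - inner ℝ α (ξ X) := by
    intro α X
    rw [real_inner_comm, hξd]
  refine ⟨?_, ?_, ?_⟩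
  · intro X Y
    rw [inner_sub_right, key, real_inner_comm (ξ X)]
    ring
  · intro X
    constructor
    · exact ⟨Linv X, 0, Submodule.zero_mem _, by simp⟩
    · intro Y γ hγ
      have hX : X - Linv X = -(ξd (ξ (Linv X))) := by
        have := hLinv1 X; linear_combination (norm := module) -this
      rw [hX, inner_neg_left, hξd, inner_sub_left, inner_zero_left,
        inner_add_right]
      have h0 : (inner ℝ (ξ (Linv X)) γ : ℝ) = 0 :=
        Submodule.inner_right_of_mem_orthogonal (hξm _) hγ
      rw [h0]
      ring
  · intro α αg αm hαg hαm hsum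
    constructor
    · exact ⟨-(Linv (ξd αm)), αg, hαg, by simp; module⟩
    · intro Y γ hγ
      set Z := Linv (ξd αm) with hZ
      have h1 : α - (αg - ξ Z) = αm + ξ Z := by
        rw [hsum]; module
      rw [zero_sub, neg_neg, h1, inner_add_right, inner_add_left, inner_add_left]
      have h2 : (inner ℝ αm γ : ℝ) = 0 :=
        Submodule.inner_right_of_mem_orthogonal hαm hγ
      have h3 : (inner ℝ (ξ Z) γ : ℝ) = 0 :=
        Submodule.inner_right_of_mem_orthogonal (hξm _) hγ
      have h4 : (inner ℝ αm (ξ Y) : ℝ) = - inner ℝ (ξd αm) Y := by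
        rw [hξd]; ring
      have h5 : ξd αm = Z - ξd (ξ Z) := (hLinv1 _).symm
      rw [h2, h3, h4, h5, inner_sub_left, hξd]
      ring
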